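/- arXiv:2406.06267 — 2 statements merged into one kernel-verified Lean document; each statement's English description precedes it below -/
import Mathlib

section
/- Let Γ be a reduced finite simple graph. Then 2 divides |Aut(Γ)| if and only if 2 divides |Aut^π(Γ)|. -/
open SimpleGraph

/-- A graph is reduced (vertex determining) if distinct vertices have distinct
open neighborhoods. -/
def Reduced {V : Type*} (G : SimpleGraph V) : Prop :=
  ∀ u v : V, G.neighborSet u = G.neighborSet v → u = v

/-- The group of two-fold projections of a graph: permutations mapping every
open neighborhood onto some open neighborhood. -/
def autPi {V : Type*} [Fintype V] (G : SimpleGraph V) : Subgroup (Equiv.Perm V) where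
  carrier := {π : Equiv.Perm V | ∀ v : V, ∃ w : V, π '' G.neighborSet v = G.neighborSet w}
  one_mem' := by
    intro v
    exact ⟨v, by simp⟩
  mul_mem' := by
    intro a b ha hb v
    obtain ⟨w, hw⟩ := hb v
    obtain ⟨u, hu⟩ := ha w
    refine ⟨u, ?_⟩
    rw [Equiv.Perm.coe_mul, Set.image_comp, hw, hu]
  inv_mem' := by
    intro a ha v
    have hfin : (Set.range G.neighborSet).Finite := Set.finite_range _
    have hmaps : Set.MapsTo (Set.image ⇑a) (Set.range G.neighborSet)
        (Set.range G.neighborSet) := by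
      rintro s ⟨u, rfl⟩
      obtain ⟨w, hw⟩ := ha u
      exact ⟨w, hw.symm⟩
    have hinj : Set.InjOn (Set.image ⇑a) (Set.range G.neighborSet) :=
      (Set.image_injective.mpr a.injective).injOn
    have hbij := (hfin.injOn_iff_bijOn_of_mapsTo hmaps).mp hinj
    obtain ⟨s, hs, hsv⟩ := hbij.surjOn ⟨v, rfl⟩
    obtain ⟨w, rfl⟩ := hs
    refine ⟨w, ?_⟩
    have : (⇑a⁻¹) '' ((⇑a) '' G.neighborSet w) = G.neighborSet w := by
      rw [← Set.image_comp]
      simp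
    rw [← this, hsv]

/-- The automorphism group of a graph, as a subgroup of the permutations of its vertices. -/
def autG {V : Type*} [Fintype V] (G : SimpleGraph V) : Subgroup (Equiv.Perm V) where
  carrier := {π : Equiv.Perm V | ∀ v w : V, G.Adj (π v) (π w) ↔ G.Adj v w}
  one_mem' := by intro v w; rfl
  mul_mem' := by
    intro a b ha hb v w
    rw [Equiv.Perm.coe_mul, Function.comp_apply, Function.comp_apply, ha, hb]
  inv_mem' := by
    intro a ha v w
    conv_rhs => rw [← (a.apply_symm_apply v : a (a⁻¹ v) = v), ← (a.apply_symm_apply w : a (a⁻¹ w) = w)]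
    rw [ha]
    rfl

set_option linter.unusedSectionVars false


/-- A finset closed under a fixed-point-free involution has even cardinality. -/
lemma even_card_of_invol {α : Type*} [DecidableEq α] (f : α → α) :
    ∀ s : Finset α, (∀ x ∈ s, f x ∈ s ∧ f (f x) = x ∧ f x ≠ x) → Even s.card := by
  intro s
  induction s using Finset.strongInduction with
  | _ s ih =>
    intro hs
    rcases s.eq_empty_or_nonempty with rfl | ⟨x, hx⟩
    · simp
    · obtain ⟨hfx, hffx, hne⟩ := hs x hx
      have hsub : s \ {x, f x} ⊂ s := by
        apply Finset.sdiff_ssubset _ (by simp)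
        intro y hy
        simp at hy
        rcases hy with rfl | rfl <;> simp [hx, hfx]
      have h2 : Even (s \ {x, f x}).card := by
        apply ih _ hsub
        intro y hy
        simp only [Finset.mem_sdiff, Finset.mem_insert, Finset.mem_singleton, not_or] at hy ⊢
        obtain ⟨hys, hyx, hyfx⟩ := hy
        obtain ⟨h1, h2, h3⟩ := hs y hys
        refine ⟨⟨h1, ?_, ?_⟩, h2, h3⟩
        · rintro h
          exact hyfx (by rw [← h2, h])
        · intro h
          exact hyx (by rw [← h2, h, hffx])
      have hcard : s.card = (s \ {x, f x}).card + 2 := by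
        have hsubs : ({x, f x} : Finset α) ⊆ s := by
          intro y hy; simp at hy; rcases hy with rfl | rfl <;> simpa
        have hc2 : ({x, f x} : Finset α).card = 2 := Finset.card_pair (Ne.symm hne)
        have := Finset.card_sdiff_of_subset hsubs
        have := Finset.card_le_card hsubs
        omega
      rw [hcard]
      exact h2.add (even_two)

section Sig
variable  {V : Type*} [Fintype V] {G : SimpleGraph V}

/-- membership condition -/
def AutPiCond (G : SimpleGraph V) (π : Equiv.Perm V) : Prop :=
  ∀ v : V, ∃ w : V, π '' G.neighborSet v = G.neighborSet w

noncomputable def sig (G : SimpleGraph V) (π : Equiv.Perm V) (v : V) : V :=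
  letI := Classical.propDecidable (∃ w : V, π '' G.neighborSet v = G.neighborSet w)
  if h : ∃ w : V, π '' G.neighborSet v = G.neighborSet w then h.choose else v

lemma sig_spec (π : Equiv.Perm V) (hπ : AutPiCond G π) (v : V) :
    π '' G.neighborSet v = G.neighborSet (sig G π v) := by
  unfold sig
  rw [dif_pos (hπ v)]
  exact (hπ v).choose_spec

lemma sig_unique (hred : Reduced G) (π : Equiv.Perm V) (hπ : AutPiCond G π) {v w : V}
    (h : π '' G.neighborSet v = G.neighborSet w) : sig G π v = w :=
  hred _ _ ((sig_spec π hπ v).symm.trans h)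

lemma sig_injective (hred : Reduced G) (π : Equiv.Perm V) (hπ : AutPiCond G π) :
    Function.Injective (sig G π) := by
  intro u v h
  apply hred
  have := (sig_spec π hπ u).trans (h ▸ (sig_spec π hπ v).symm)
  exact Set.image_injective.mpr π.injective this

lemma sig_bijective (hred : Reduced G) (π : Equiv.Perm V) (hπ : AutPiCond G π) :
    Function.Bijective (sig G π) :=
  Finite.injective_iff_bijective.mp (sig_injective hred π hπ)

lemma sig_adj (π : Equiv.Perm V) (hπ : AutPiCond G π) (v w : V) :
    G.Adj v w ↔ G.Adj (sig G π v) (π w) := by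
  have h := sig_spec π hπ v
  constructor
  · intro hadj
    have : π w ∈ π '' G.neighborSet v := ⟨w, hadj, rfl⟩
    rw [h] at this
    exact this
  · intro hadj
    have : π w ∈ G.neighborSet (sig G π v) := hadj
    rw [← h] at this
    obtain ⟨u, hu, huw⟩ := this
    rwa [← π.injective huw]

lemma sig_image (hred : Reduced G) (π : Equiv.Perm V) (hπ : AutPiCond G π) (v : V) :
    sig G π '' G.neighborSet v = G.neighborSet (π v) := by
  ext w
  simp only [Set.mem_image, mem_neighborSet]
  constructor
  · rintro ⟨u, hu, rfl⟩
    exact ((sig_adj π hπ u v).mp hu.symm).symm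
  · intro hw
    obtain ⟨u, rfl⟩ := (sig_bijective hred π hπ).surjective w
    exact ⟨u, ((sig_adj π hπ u v).mpr hw.symm).symm, rfl⟩

noncomputable def sigPerm (hred : Reduced G) (π : Equiv.Perm V) (hπ : AutPiCond G π) :
    Equiv.Perm V :=
  Equiv.ofBijective _ (sig_bijective hred π hπ)

lemma sigPerm_cond (hred : Reduced G) (π : Equiv.Perm V) (hπ : AutPiCond G π) :
    AutPiCond G (sigPerm hred π hπ) := fun v =>
  ⟨π v, sig_image hred π hπ v⟩

lemma sig_sigPerm (hred : Reduced G) (π : Equiv.Perm V) (hπ : AutPiCond G π) (v : V) :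
    sig G (sigPerm hred π hπ) v = π v :=
  sig_unique hred _ (sigPerm_cond hred π hπ) (sig_image hred π hπ v)

lemma sig_mul (hred : Reduced G) (π ρ : Equiv.Perm V) (hπ : AutPiCond G π)
    (hρ : AutPiCond G ρ) (v : V) : sig G (π * ρ) v = sig G π (sig G ρ v) := by
  apply sig_unique hred (π * ρ) (fun u => ⟨sig G π (sig G ρ u), ?_⟩)
  all_goals
    rw [Equiv.Perm.coe_mul, Set.image_comp, sig_spec ρ hρ, sig_spec π hπ]

lemma sig_one (hred : Reduced G) : ∀ v, sig G (1 : Equiv.Perm V) v = v := fun v =>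
  sig_unique hred 1 (fun u => ⟨u, by simp⟩) (by simp)

end Sig


section Main
variable {V : Type*} [Fintype V] {G : SimpleGraph V}

lemma mem_autPi_iff {π : Equiv.Perm V} : π ∈ autPi G ↔ AutPiCond G π := Iff.rfl

lemma autG_le_autPi : autG G ≤ autPi G := by
  intro π hπ v
  refine ⟨π v, ?_⟩
  ext w
  simp only [Set.mem_image, mem_neighborSet]
  constructor
  · rintro ⟨u, hu, rfl⟩
    exact (hπ v u).mpr hu
  · intro hw
    refine ⟨π⁻¹ w, ?_, π.apply_symm_apply w⟩
    have := (hπ v (π⁻¹ w)).mp (by simpa using hw)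
    exact this

end Main

/-- For a reduced finite simple graph Γ, 2 divides |Aut(Γ)| iff 2 divides |Aut^π(Γ)|. -/
theorem stmt_6 {V : Type*} [Fintype V] (G : SimpleGraph V) (hred : Reduced G) :
    2 ∣ Nat.card (autG G) ↔ 2 ∣ Nat.card (autPi G) := by
  constructor
  · intro h
    exact h.trans (Subgroup.card_dvd_of_le autG_le_autPi)
  · intro h
    classical
    haveI : Fintype ↥(autPi G) := Fintype.ofFinite _
    set A := ↥(autPi G) with hA
    -- the companion map T
    let T : A → A := fun a =>
      ⟨sigPerm hred (a : Equiv.Perm V) (mem_autPi_iff.mp a.2),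
        mem_autPi_iff.mpr (sigPerm_cond hred _ _)⟩
    have hT_apply : ∀ (a : A) (v : V), ((T a : A) : Equiv.Perm V) v = sig G (a : Equiv.Perm V) v :=
      fun a v => rfl
    have hTT : ∀ a : A, T (T a) = a := by
      intro a
      apply Subtype.ext; apply Equiv.ext; intro v
      rw [hT_apply]
      exact sig_sigPerm hred _ (mem_autPi_iff.mp a.2) v
    have hT1 : T 1 = 1 := by
      apply Subtype.ext; apply Equiv.ext; intro v
      rw [hT_apply]
      exact sig_one hred v
    have hTsq : ∀ a : A, a * a = 1 → T a * T a = 1 := by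
      intro a ha
      apply Subtype.ext; apply Equiv.ext; intro v
      have hcoe : ((a : Equiv.Perm V)) * (a : Equiv.Perm V) = 1 := by
        have := congrArg (Subtype.val) ha
        exact this
      show sig G (a : Equiv.Perm V) (sig G (a : Equiv.Perm V) v) = v
      rw [← sig_mul hred _ _ (mem_autPi_iff.mp a.2) (mem_autPi_iff.mp a.2), hcoe,
        sig_one hred]
    have hTne : ∀ a : A, a ≠ 1 → T a ≠ 1 := by
      intro a ha hTa
      apply ha
      rw [← hTT a, hTa, hT1]
    -- the set of involutions
    set S : Finset A := Finset.univ.filter (fun a => a * a = 1 ∧ a ≠ 1) with hS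
    have hfix : Finset.univ.filter (fun a : A => a⁻¹ = a) = insert 1 S := by
      ext a
      simp only [hS, Finset.mem_filter, Finset.mem_univ, true_and, Finset.mem_insert]
      constructor
      · intro hinv
        rcases eq_or_ne a 1 with rfl | hne
        · exact Or.inl rfl
        · exact Or.inr ⟨mul_eq_one_iff_eq_inv.mpr hinv.symm, hne⟩
      · rintro (rfl | ⟨hmul, _⟩)
        · simp
        · rw [inv_eq_iff_mul_eq_one]; exact hmul
    have hcardA : Even (Fintype.card A) := by
      rw [← Nat.card_eq_fintype_card]
      exact (even_iff_two_dvd).mpr h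
    have hmoved : Even ((Finset.univ.filter (fun a : A => ¬ a⁻¹ = a)).card) := by
      apply even_card_of_invol (fun a : A => a⁻¹)
      intro x hx
      simp only [Finset.mem_filter, Finset.mem_univ, true_and] at hx ⊢
      refine ⟨?_, inv_inv x, hx⟩
      rw [inv_inv]
      exact fun hh => hx hh.symm
    have hsplit := Finset.card_filter_add_card_filter_not
      (s := (Finset.univ : Finset A)) (p := fun a : A => a⁻¹ = a)
    have hfixcard : Even ((Finset.univ.filter (fun a : A => a⁻¹ = a)).card) := by
      rw [Finset.card_univ] at hsplit
      rcases hmoved with ⟨k, hk⟩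
      rcases hcardA with ⟨m, hm⟩
      exact ⟨m - k, by omega⟩
    have h1S : (1 : A) ∉ S := by simp [hS]
    have hScard : ¬ Even S.card := by
      rw [hfix, Finset.card_insert_of_notMem h1S] at hfixcard
      rcases hfixcard with ⟨k, hk⟩
      intro ⟨m, hm⟩
      omega
    -- T maps S to S
    have hTS : ∀ a ∈ S, T a ∈ S := by
      intro a ha
      simp only [hS, Finset.mem_filter, Finset.mem_univ, true_and] at ha ⊢
      exact ⟨hTsq a ha.1, hTne a ha.2⟩
    -- T has a fixed point on S
    have hmovedS : Even ((S.filter (fun a : A => ¬ T a = a)).card) := by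
      apply even_card_of_invol T
      intro x hx
      simp only [Finset.mem_filter] at hx ⊢
      obtain ⟨hxS, hxne⟩ := hx
      refine ⟨⟨hTS x hxS, ?_⟩, hTT x, hxne⟩
      rw [hTT]
      exact fun hh => hxne hh.symm
    have hsplitS := Finset.card_filter_add_card_filter_not
      (s := S) (p := fun a : A => T a = a)
    have hfixS : (S.filter (fun a : A => T a = a)).Nonempty := by
      rw [← Finset.card_pos]
      by_contra hempty
      push_neg at hempty
      interval_cases h' : (S.filter (fun a : A => T a = a)).card
      · apply hScard
        rcases hmovedS with ⟨k, hk⟩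
        exact ⟨k, by omega⟩
    obtain ⟨a, haS⟩ := hfixS
    simp only [hS, Finset.mem_filter, Finset.mem_univ, true_and] at haS
    obtain ⟨⟨hmul, hne⟩, hfixa⟩ := haS
    -- a is an automorphism
    have hsig_eq : ∀ v, sig G (a : Equiv.Perm V) v = (a : Equiv.Perm V) v := by
      intro v
      rw [← hT_apply a v, hfixa]
    have hmem : (a : Equiv.Perm V) ∈ autG G := by
      intro v w
      have := sig_adj (G := G) (a : Equiv.Perm V) (mem_autPi_iff.mp a.2) v w
      rw [hsig_eq] at this
      exact this.symm
    -- order 2 element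
    have hcoene : ((a : Equiv.Perm V)) ≠ 1 := by
      intro hh
      exact hne (Subtype.ext hh)
    have hcoemul : ((a : Equiv.Perm V)) * (a : Equiv.Perm V) = 1 :=
      congrArg Subtype.val hmul
    haveI : Fact (Nat.Prime 2) := ⟨Nat.prime_two⟩
    have horder : orderOf (⟨(a : Equiv.Perm V), hmem⟩ : autG G) = 2 := by
      apply orderOf_eq_prime
      · apply Subtype.ext
        show ((a : Equiv.Perm V)) ^ 2 = 1
        rw [sq]; exact hcoemul
      · intro hh
        exact hcoene (congrArg Subtype.val hh)
    rw [← horder]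
    exact orderOf_dvd_natCard _
end

section
/- Let Γ = (V,E) be a reduced finite simple graph. Then every two-fold projection of Γ is an automorphism of the square graph Γ², i.e. Aut^π(Γ) ≤ Aut(Γ²). -/
open SimpleGraph

/-- The square of a graph: distinct vertices are adjacent iff they have a common neighbor. -/
def square {V : Type*} (G : SimpleGraph V) : SimpleGraph V where
  Adj v w := v ≠ w ∧ ∃ u, G.Adj v u ∧ G.Adj u w
  symm := ⟨fun v w h => ⟨h.1.symm, h.2.choose, h.2.choose_spec.2.symm, h.2.choose_spec.1.symm⟩⟩
  loopless := ⟨fun v h => h.1 rfl⟩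

lemma autPi_square_mono {V : Type*} [Fintype V] (G : SimpleGraph V)
    {π : Equiv.Perm V} (hπ : π ∈ autPi G) {v w : V} (h : (square G).Adj v w) :
    (square G).Adj (π v) (π w) := by
  obtain ⟨hne, u, hvu, huw⟩ := h
  obtain ⟨x, hx⟩ := hπ u
  have hv : π v ∈ G.neighborSet x := hx ▸ ⟨v, hvu.symm, rfl⟩
  have hw : π w ∈ G.neighborSet x := hx ▸ ⟨w, huw, rfl⟩
  exact ⟨fun e => hne (π.injective e), x, hv.symm, hw⟩

/-- For a reduced finite simple graph Γ, every two-fold projection is an automorphism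
of the square graph Γ²: Aut^π(Γ) ≤ Aut(Γ²). -/
theorem stmt_7 {V : Type*} [Fintype V] (G : SimpleGraph V) (hred : Reduced G) :
    autPi G ≤ autG (square G) := by
  intro π hπ v w
  constructor
  · intro h
    have := autPi_square_mono G ((autPi G).inv_mem hπ) h
    simpa using this
  · exact autPi_square_mono G hπ
end
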